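/- Let I ⊂ ℝ be a bounded interval and S = ⋃_{k=1}^N (a_k, b_k) ⊂ I a finite disjoint union of open intervals with |S| > 0. Then for every t ∈ [1, |I|/|S|] there exists a finite collection of pairwise disjoint intervals I_1, …, I_M contained in I such that S ⊆ ⋃_n I_n and t·|S ∩ I_n| = |I_n| for every n. -/

import Mathlib

open MeasureTheory Function

namespace CoverAux

def mmass (l : List (ℝ × ℝ)) : ℝ := (l.map fun p => p.2 - p.1).sum
lemma mmass_def (l : List (ℝ × ℝ)) : mmass l = (l.map fun p => p.2 - p.1).sum := rfl
lemma mmass_nil : mmass ([] : List (ℝ × ℝ)) = 0 := rfl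
lemma mmass_cons (p : ℝ × ℝ) (l : List (ℝ × ℝ)) :
    mmass (p :: l) = (p.2 - p.1) + mmass l := by simp [mmass]
lemma mmass_append (l₁ l₂ : List (ℝ × ℝ)) :
    mmass (l₁ ++ l₂) = mmass l₁ + mmass l₂ := by simp [mmass]
lemma mmass_nonneg {l : List (ℝ × ℝ)} (h : ∀ p ∈ l, p.1 < p.2) : 0 ≤ mmass l := by
  induction l with
  | nil => simp [mmass]
  | cons p l ih =>
    rw [mmass_cons]
    have h1 := h p (List.mem_cons_self)
    have h2 := ih fun q hq => h q (List.mem_cons_of_mem _ hq)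
    linarith

lemma mmass_filter_eq (f : ℝ × ℝ → Bool) (L : List (ℝ × ℝ)) :
    mmass (L.filter f) = (L.map fun p => if f p then p.2 - p.1 else 0).sum := by
  induction L with
  | nil => simp [mmass]
  | cons p L ih =>
    by_cases h : f p <;> simp [List.filter_cons, h, mmass_cons, ih]

lemma split' (t : ℝ) (ht : 1 ≤ t) (c₁ : ℝ) :
    ∀ (L : List (ℝ × ℝ)), L.Pairwise (fun p q => p.2 ≤ q.1) →
    (∀ r ∈ L, r.1 < r.2) → ∀ m : ℝ,
    (∃ r ∈ L, c₁ + t * (m + mmass L) < r.2) →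
    ∃ L₁ L₂, L = L₁ ++ L₂ ∧ L₂ ≠ [] ∧
      (∀ r ∈ L₁, r.2 ≤ c₁ + t * (m + mmass L₁)) ∧
      (∀ r ∈ L₂, c₁ + t * (m + mmass L₁) < r.1) := by
  intro L
  induction L with
  | nil => rintro _ _ m ⟨r, hr, _⟩; simp at hr
  | cons q L' ih =>
    intro hpw hlt m hex
    have hqlt : q.1 < q.2 := hlt q (List.mem_cons_self)
    have hL'lt : ∀ r ∈ L', r.1 < r.2 := fun r hr => hlt r (List.mem_cons_of_mem _ hr)
    have hmassL' : 0 ≤ mmass L' := mmass_nonneg hL'lt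
    have hsep : ∀ r ∈ L', q.2 ≤ r.1 := (List.pairwise_cons.1 hpw).1
    by_cases hq : c₁ + t * m < q.1
    · refine ⟨[], q :: L', by simp, by simp, by simp, ?_⟩
      intro r hr
      rw [mmass_nil, add_zero]
      rcases List.mem_cons.1 hr with rfl | hr
      · exact hq
      · have := hsep r hr; linarith
    · push_neg at hq
      have hex' : ∃ r ∈ L', c₁ + t * (m + (q.2 - q.1) + mmass L') < r.2 := by
        obtain ⟨r, hr, hrb⟩ := hex
        rcases List.mem_cons.1 hr with rfl | hr
        · exfalso
          rw [mmass_cons] at hrb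
          nlinarith
        · refine ⟨r, hr, ?_⟩
          rw [mmass_cons] at hrb
          have harr : m + (q.2 - q.1) + mmass L' = m + (q.2 - q.1 + mmass L') := by ring
          rw [harr]
          linarith
      obtain ⟨L₁, L₂, hsp, hne, h1, h2⟩ :=
        ih (List.pairwise_cons.1 hpw).2 hL'lt (m + (q.2 - q.1)) hex'
      have hmL₁ : 0 ≤ mmass L₁ :=
          mmass_nonneg fun p hp => hL'lt p (hsp ▸ List.mem_append_left _ hp)
      refine ⟨q :: L₁, L₂, by simp [hsp], hne, ?_, ?_⟩
      · intro r hr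
        rcases List.mem_cons.1 hr with rfl | hr
        · rw [mmass_cons]; nlinarith
        · have := h1 r hr
          rw [mmass_cons]
          have harr : m + (q.2 - q.1) + mmass L₁ = m + (q.2 - q.1 + mmass L₁) := by ring
          rw [harr] at this
          linarith
      · intro r hr
        have := h2 r hr
        rw [mmass_cons]
        have harr : m + (q.2 - q.1) + mmass L₁ = m + (q.2 - q.1 + mmass L₁) := by ring
        rw [harr] at this
        linarith

lemma core (t : ℝ) (ht : 1 ≤ t) :
    ∀ (n : ℕ) (l : List (ℝ × ℝ)) (a b : ℝ), l.length ≤ n →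
    (∀ p ∈ l, a ≤ p.1 ∧ p.1 < p.2 ∧ p.2 ≤ b) →
    l.Pairwise (fun p q => p.2 ≤ q.1) →
    t * mmass l ≤ b - a →
    ∃ J : List (ℝ × ℝ),
      (∀ q ∈ J, a ≤ q.1 ∧ q.1 ≤ q.2 ∧ q.2 ≤ b) ∧
      J.Pairwise (fun q r => q.2 < r.1) ∧
      (∀ p ∈ l, ∃ q ∈ J, q.1 ≤ p.1 ∧ p.2 ≤ q.2) ∧
      (∀ q ∈ J, ∀ p ∈ l, (q.1 ≤ p.1 ∧ p.2 ≤ q.2) ∨ q.2 ≤ p.1 ∨ p.2 ≤ q.1) ∧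
      (∀ q ∈ J, q.2 - q.1 = t * mmass (l.filter fun p => decide (q.1 ≤ p.1 ∧ p.2 ≤ q.2))) := by
  have ht0 : (0:ℝ) ≤ t := by linarith
  intro n
  induction n with
  | zero =>
    intro l a b hlen _ _ _
    have hl : l = [] := List.length_eq_zero_iff.1 (Nat.le_zero.1 hlen)
    subst hl
    exact ⟨[], by simp, by simp, by simp, by simp, by simp⟩
  | succ n ih =>
    intro l a b hlen hb hpw hbud
    cases l with
    | nil => exact ⟨[], by simp, by simp, by simp, by simp, by simp⟩
    | cons p rest =>
      have hflt : ∀ r ∈ p :: rest, r.1 < r.2 := fun r hr => (hb r hr).2.1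
      have hrestlt : ∀ r ∈ rest, r.1 < r.2 := fun r hr => hflt r (List.mem_cons_of_mem _ hr)
      have hplt : p.1 < p.2 := hflt p (List.mem_cons_self)
      have hsepp : ∀ r ∈ rest, p.2 ≤ r.1 := (List.pairwise_cons.1 hpw).1
      have hpwrest : rest.Pairwise (fun p q => p.2 ≤ q.1) := (List.pairwise_cons.1 hpw).2
      have hfst : ∀ r ∈ p :: rest, p.1 ≤ r.1 := by
        intro r hr
        rcases List.mem_cons.1 hr with rfl | hr
        · exact le_refl _
        · exact le_trans (le_of_lt hplt) (hsepp r hr)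
      have hmrest : 0 ≤ mmass rest := mmass_nonneg hrestlt
      have hml : mmass (p :: rest) = (p.2 - p.1) + mmass rest := mmass_cons _ _
      have hml0 : 0 ≤ mmass (p :: rest) := by linarith
      by_cases hC : ∀ r ∈ p :: rest, r.2 ≤ p.1 + t * mmass (p :: rest)
      · -- Case 1: one interval suffices
        set ml := mmass (p :: rest) with hmldef
        set e := min p.1 (b - t * ml) with hedef
        set g := e + t * ml with hgdef
        have html : 0 ≤ t * ml := mul_nonneg ht0 hml0
        have hae : a ≤ e := le_min (hb p (List.mem_cons_self)).1 (by linarith)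
        have heg : e ≤ g := by rw [hgdef]; linarith
        have hgb : g ≤ b := by
          have := min_le_right p.1 (b - t * ml)
          rw [hgdef]; linarith
        have hgmin : g = min (p.1 + t * ml) b := by
          rw [hgdef, hedef]
          rcases le_total p.1 (b - t * ml) with h | h
          · rw [min_eq_left h, min_eq_left (by linarith : p.1 + t * ml ≤ b)]
          · rw [min_eq_right h, min_eq_right (by linarith : b ≤ p.1 + t * ml)]
            ring
        have hcov : ∀ r ∈ p :: rest, e ≤ r.1 ∧ r.2 ≤ g := by
          intro r hr
          constructor
          · exact le_trans (min_le_left _ _) (hfst r hr)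
          · rw [hgmin]
            exact le_min (hC r hr) (hb r hr).2.2
        refine ⟨[(e, g)], ?_, by simp, ?_, ?_, ?_⟩
        · intro q hq
          simp only [List.mem_singleton] at hq
          subst hq
          exact ⟨hae, heg, hgb⟩
        · intro r hr
          exact ⟨(e, g), by simp, (hcov r hr).1, (hcov r hr).2⟩
        · intro q hq r hr
          simp only [List.mem_singleton] at hq
          subst hq
          exact Or.inl ⟨(hcov r hr).1, (hcov r hr).2⟩
        · intro q hq
          simp only [List.mem_singleton] at hq
          subst hq
          have hfe : (p :: rest).filter (fun r => decide ((e,g).1 ≤ r.1 ∧ r.2 ≤ (e,g).2)) = p :: rest := by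
            apply List.filter_eq_self.2
            intro r hr
            simp only [decide_eq_true_eq]
            exact hcov r hr
          rw [hfe]
          simp [hgdef, hmldef]
      · -- Case 2: split
        push_neg at hC
        obtain ⟨r₀, hr₀mem, hr₀⟩ := hC
        have hex : ∃ r ∈ rest, p.1 + t * ((p.2 - p.1) + mmass rest) < r.2 := by
          rcases List.mem_cons.1 hr₀mem with rfl | hr
          · exfalso; rw [hml] at hr₀; nlinarith
          · exact ⟨r₀, hr, by rw [hml] at hr₀; linarith⟩
        obtain ⟨L₁, L₂, hsp, hne, h1, h2⟩ := split' t ht p.1 rest hpwrest hrestlt (p.2 - p.1) hex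
        obtain ⟨q₂, L₂', hL₂⟩ := List.exists_cons_of_ne_nil hne
        have hmL₁ : 0 ≤ mmass L₁ :=
          mmass_nonneg fun r hr => hrestlt r (hsp ▸ List.mem_append_left _ hr)
        have hmL₂ : 0 ≤ mmass L₂ :=
          mmass_nonneg fun r hr => hrestlt r (hsp ▸ List.mem_append_right _ hr)
        set l₁ : List (ℝ × ℝ) := p :: L₁ with hl₁def
        set x : ℝ := p.1 + t * mmass l₁ with hxdef
        have hml₁ : mmass l₁ = (p.2 - p.1) + mmass L₁ := mmass_cons _ _
        have hmassdec : mmass (p :: rest) = mmass l₁ + mmass L₂ := by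
          rw [hml, hsp, mmass_append, hml₁]; ring
        have hx_d : ∀ r ∈ l₁, r.2 ≤ x := by
          intro r hr
          rcases List.mem_cons.1 hr with rfl | hr
          · rw [hxdef, hml₁]; nlinarith
          · have := h1 r hr
            rw [hxdef, hml₁]
            linarith [this]
        have hx_lt : ∀ r ∈ L₂, x < r.1 := by
          intro r hr
          have := h2 r hr
          rw [hxdef, hml₁]
          linarith [this]
        have hLmem : ∀ r ∈ l₁, r ∈ p :: rest := by
          intro r hr
          rcases List.mem_cons.1 hr with rfl | hr
          · exact List.mem_cons_self
          · exact List.mem_cons_of_mem _ (hsp ▸ List.mem_append_left _ hr)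
        have hL₂mem : ∀ r ∈ L₂, r ∈ p :: rest := fun r hr =>
          List.mem_cons_of_mem _ (hsp ▸ List.mem_append_right _ hr)
        have hxb : x + t * mmass L₂ < b := by
          obtain ⟨r, hr, hrb⟩ := hex
          have hrbnd := (hb r (List.mem_cons_of_mem _ hr)).2.2
          have : x + t * mmass L₂ = p.1 + t * mmass (p :: rest) := by
            rw [hxdef, hmassdec]; ring
          rw [this, hml]
          linarith
        set a₂ : ℝ := min q₂.1 (b - t * mmass L₂) with ha₂def
        have hxa₂ : x < a₂ := by
          apply lt_min
          · exact hx_lt q₂ (hL₂ ▸ List.mem_cons_self)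
          · linarith [mul_nonneg ht0 hmL₂]
        have hpwL₂ : L₂.Pairwise (fun p q => p.2 ≤ q.1) := by
          have := hsp ▸ hpwrest
          exact (List.pairwise_append.1 this).2.1
        have hpwl₁ : l₁.Pairwise (fun p q => p.2 ≤ q.1) := by
          rw [hl₁def]
          refine List.pairwise_cons.2 ⟨?_, ?_⟩
          · intro r hr; exact hsepp r (hsp ▸ List.mem_append_left _ hr)
          · have := hsp ▸ hpwrest
            exact (List.pairwise_append.1 this).1
        have hlenl : (p :: rest).length = l₁.length + L₂.length := by
          rw [hl₁def, hsp]; simp; omega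
        have hL₂len : 1 ≤ L₂.length := by rw [hL₂]; simp
        have hl₁len : l₁.length = L₁.length + 1 := by rw [hl₁def]; simp
        have hlen' : (p :: rest).length = rest.length + 1 := by simp
        -- left recursive call
        obtain ⟨J₁, hbnd₁, hpw₁, hcov₁, hdich₁, hlen₁⟩ :=
          ih l₁ p.1 x (by omega)
            (fun r hr => ⟨hfst r (hLmem r hr), hflt r (hLmem r hr), hx_d r hr⟩)
            hpwl₁ (by rw [hxdef]; linarith)
        -- right recursive call
        have hq₂fst : ∀ r ∈ L₂, q₂.1 ≤ r.1 := by
          intro r hr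
          rw [hL₂] at hr
          rcases List.mem_cons.1 hr with rfl | hr
          · exact le_refl _
          · have hsepq := (List.pairwise_cons.1 (hL₂ ▸ hpwL₂)).1 r hr
            have : q₂.1 < q₂.2 := hrestlt q₂ (hsp ▸ List.mem_append_right _ (hL₂ ▸ List.mem_cons_self))
            linarith
        obtain ⟨J₂, hbnd₂, hpw₂, hcov₂, hdich₂, hlen₂⟩ :=
          ih L₂ a₂ b (by omega)
            (fun r hr => ⟨le_trans (min_le_left _ _) (hq₂fst r hr), hflt r (hL₂mem r hr),
              (hb r (hL₂mem r hr)).2.2⟩)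
            hpwL₂ (by linarith [min_le_right q₂.1 (b - t * mmass L₂)])
        have hJ₁x : ∀ q ∈ J₁, q.2 ≤ x := fun q hq => (hbnd₁ q hq).2.2
        have hJ₂a : ∀ q ∈ J₂, a₂ ≤ q.1 := fun q hq => (hbnd₂ q hq).1
        have hxb' : x ≤ b := by linarith [mul_nonneg ht0 hmL₂]
        have hml₁pos : (0:ℝ) ≤ mmass l₁ := by rw [hml₁]; linarith
        have htl₁ : (0:ℝ) ≤ t * mmass l₁ := mul_nonneg ht0 hml₁pos
        have hdist : t * mmass (p :: rest) = t * mmass l₁ + t * mmass L₂ := by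
          rw [hmassdec]; ring
        have haa₂ : a ≤ a₂ := by
          apply le_min
          · exact (hb q₂ (hL₂mem q₂ (hL₂ ▸ List.mem_cons_self))).1
          · linarith
        refine ⟨J₁ ++ J₂, ?_, ?_, ?_, ?_, ?_⟩
        · intro q hq
          rcases List.mem_append.1 hq with hq | hq
          · obtain ⟨hh1, hh2, hh3⟩ := hbnd₁ q hq
            exact ⟨le_trans (hb p (List.mem_cons_self)).1 hh1, hh2, le_trans hh3 hxb'⟩
          · obtain ⟨hh1, hh2, hh3⟩ := hbnd₂ q hq
            exact ⟨le_trans haa₂ hh1, hh2, hh3⟩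
        · refine List.pairwise_append.2 ⟨hpw₁, hpw₂, ?_⟩
          intro q hq r hr
          calc q.2 ≤ x := hJ₁x q hq
          _ < a₂ := hxa₂
          _ ≤ r.1 := hJ₂a r hr
        · intro r hr
          rcases List.mem_cons.1 hr with rfl | hr
          · obtain ⟨q, hqJ, hq⟩ := hcov₁ r (List.mem_cons_self)
            exact ⟨q, List.mem_append_left _ hqJ, hq⟩
          · rcases List.mem_append.1 (hsp ▸ hr) with hr' | hr'
            · obtain ⟨q, hqJ, hq⟩ := hcov₁ r (List.mem_cons_of_mem _ hr')
              exact ⟨q, List.mem_append_left _ hqJ, hq⟩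
            · obtain ⟨q, hqJ, hq⟩ := hcov₂ r hr'
              exact ⟨q, List.mem_append_right _ hqJ, hq⟩
        · intro q hq r hr
          have hrcase : r ∈ l₁ ∨ r ∈ L₂ := by
            rcases List.mem_cons.1 hr with rfl | hr'
            · exact Or.inl (List.mem_cons_self)
            · rcases List.mem_append.1 (hsp ▸ hr') with h | h
              · exact Or.inl (List.mem_cons_of_mem _ h)
              · exact Or.inr h
          rcases List.mem_append.1 hq with hq | hq
          · rcases hrcase with hr' | hr'
            · exact hdich₁ q hq r hr'
            · exact Or.inr (Or.inl (le_of_lt (lt_of_le_of_lt (hJ₁x q hq) (hx_lt r hr'))))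
          · rcases hrcase with hr' | hr'
            · refine Or.inr (Or.inr ?_)
              calc r.2 ≤ x := hx_d r hr'
              _ ≤ a₂ := le_of_lt hxa₂
              _ ≤ q.1 := hJ₂a q hq
            · exact hdich₂ q hq r hr'
        · intro q hq
          have hcons : (p :: rest) = l₁ ++ L₂ := by rw [hl₁def, hsp]; simp
          rcases List.mem_append.1 hq with hq | hq
          · have hfil : L₂.filter (fun r => decide (q.1 ≤ r.1 ∧ r.2 ≤ q.2)) = [] := by
              apply List.filter_eq_nil_iff.2
              intro r hr
              simp only [decide_eq_true_eq, not_and]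
              intro _
              have := hx_lt r hr
              have := hrestlt r (hsp ▸ List.mem_append_right _ hr)
              have := hJ₁x q hq
              linarith
            rw [hcons, List.filter_append, hfil, mmass_append, mmass_nil, add_zero]
            exact hlen₁ q hq
          · have hfil : l₁.filter (fun r => decide (q.1 ≤ r.1 ∧ r.2 ≤ q.2)) = [] := by
              apply List.filter_eq_nil_iff.2
              intro r hr
              simp only [decide_eq_true_eq, not_and]
              intro hc
              have h1 := hx_d r hr
              have h2 := hflt r (hLmem r hr)
              have h3 := hJ₂a q hq
              linarith
            rw [hcons, List.filter_append, hfil, List.nil_append]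
            exact hlen₂ q hq

end CoverAux


open CoverAux in
/-- Covering lemma (Lemma 3.1): if `S ⊆ I` is a finite disjoint union of open
intervals with `|S| > 0` and `1 ≤ t ≤ |I|/|S|`, then there are finitely many
pairwise disjoint subintervals of `I` covering `S` with `t·|S ∩ Iₙ| = |Iₙ|`. -/
theorem stmt_9 (a b : ℝ) (hab : a < b) (N : ℕ) (c d : Fin N → ℝ)
    (hcd : ∀ k, c k < d k)
    (hsub : ∀ k, Set.Ioo (c k) (d k) ⊆ Set.Icc a b)
    (hdisj : Pairwise (onFun Disjoint fun k => Set.Ioo (c k) (d k)))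
    (S : Set ℝ) (hS : S = ⋃ k, Set.Ioo (c k) (d k))
    (hSpos : 0 < (volume S).toReal)
    (t : ℝ) (ht1 : 1 ≤ t) (ht2 : t ≤ (b - a) / (volume S).toReal) :
    ∃ (M : ℕ) (e g : Fin M → ℝ),
      (∀ n, e n ≤ g n) ∧
      (∀ n, Set.Icc (e n) (g n) ⊆ Set.Icc a b) ∧
      Pairwise (onFun Disjoint fun n => Set.Icc (e n) (g n)) ∧
      S ⊆ ⋃ n, Set.Icc (e n) (g n) ∧
      ∀ n, ENNReal.ofReal t * volume (S ∩ Set.Icc (e n) (g n)) =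
        volume (Set.Icc (e n) (g n)) := by
  classical
  have ht0 : (0:ℝ) ≤ t := by linarith
  -- bounds on components
  have hbnd : ∀ k, a ≤ c k ∧ d k ≤ b := by
    intro k
    have h := hsub k
    constructor
    · by_contra hlt
      push_neg at hlt
      set y := min ((c k + d k)/2) ((c k + a)/2) with hy
      have hy1 : c k < y := lt_min (by linarith [hcd k]) (by linarith)
      have hy2 : y < d k := lt_of_le_of_lt (min_le_left _ _) (by linarith [hcd k])
      have hy3 : y < a := lt_of_le_of_lt (min_le_right _ _) (by linarith)
      exact absurd (h ⟨hy1, hy2⟩).1 (by linarith)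
    · by_contra hlt
      push_neg at hlt
      set y := max ((c k + d k)/2) ((d k + b)/2) with hy
      have hy1 : c k < y := lt_of_lt_of_le (by linarith [hcd k]) (le_max_left _ _)
      have hy2 : y < d k := max_lt (by linarith [hcd k]) (by linarith)
      have hy3 : b < y := lt_of_lt_of_le (by linarith) (le_max_right _ _)
      exact absurd (h ⟨hy1, hy2⟩).2 (by linarith)
  -- the sorted list of components
  set rel : ℝ × ℝ → ℝ × ℝ → Prop := fun p q => p.1 ≤ q.1 with hrel
  haveI : DecidableRel rel := fun p q => inferInstanceAs (Decidable (p.1 ≤ q.1))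
  haveI : IsTotal (ℝ × ℝ) rel := ⟨fun p q => le_total p.1 q.1⟩
  haveI : IsTrans (ℝ × ℝ) rel := ⟨fun p q r h1 h2 => le_trans h1 h2⟩
  set L₀ : List (ℝ × ℝ) := List.ofFn (fun k => (c k, d k)) with hL₀
  set l : List (ℝ × ℝ) := L₀.insertionSort rel with hl
  have hperm : List.Perm l L₀ := List.perm_insertionSort rel L₀
  have hmeml : ∀ k, (c k, d k) ∈ l := by
    intro k
    rw [hperm.mem_iff, hL₀, List.mem_ofFn]
    exact ⟨k, rfl⟩
  have hmem' : ∀ p ∈ l, ∃ k, (c k, d k) = p := by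
    intro p hp
    rw [hperm.mem_iff, hL₀, List.mem_ofFn] at hp
    exact hp
  -- pairwise separation for the sorted list
  set R₀ : ℝ × ℝ → ℝ × ℝ → Prop :=
    fun p q => Disjoint (Set.Ioo p.1 p.2) (Set.Ioo q.1 q.2) ∧ p.1 < p.2 ∧ q.1 < q.2 with hR₀
  have hR₀sym : Symmetric R₀ := fun p q h => ⟨h.1.symm, h.2.2, h.2.1⟩
  have hL₀pw : L₀.Pairwise R₀ := by
    rw [hL₀, List.pairwise_ofFn]
    intro i j hij
    exact ⟨hdisj (ne_of_lt hij), hcd i, hcd j⟩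
  have hlpw : l.Pairwise R₀ := (hperm.pairwise_iff (fun {x y} h => hR₀sym h)).2 hL₀pw
  have hsort : l.Pairwise rel := List.pairwise_insertionSort (r := rel) L₀
  have hsep : l.Pairwise (fun p q => p.2 ≤ q.1) := by
    refine (hlpw.and hsort).imp ?_
    rintro p q ⟨⟨hdis, hp, hq⟩, hle⟩
    by_contra hcon
    push_neg at hcon
    have hm : q.1 < min p.2 q.2 := lt_min hcon hq
    set y := (q.1 + min p.2 q.2)/2 with hy
    have h1 := min_le_left p.2 q.2
    have h2 := min_le_right p.2 q.2
    have hyp : y ∈ Set.Ioo p.1 p.2 := ⟨by linarith, by linarith⟩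
    have hyq : y ∈ Set.Ioo q.1 q.2 := ⟨by linarith, by linarith⟩
    exact Set.disjoint_left.1 hdis hyp hyq
  -- total mass
  set Δ : ℝ := ∑ k, (d k - c k) with hΔ
  have hΔ0 : 0 ≤ Δ := Finset.sum_nonneg fun k _ => by linarith [hcd k]
  have hvolS : volume S = ENNReal.ofReal Δ := by
    rw [hS, measure_iUnion hdisj (fun k => measurableSet_Ioo)]
    rw [tsum_fintype]
    rw [hΔ, ENNReal.ofReal_sum_of_nonneg (fun k _ => by linarith [hcd k])]
    exact Finset.sum_congr rfl fun k _ => Real.volume_Ioo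
  have htoReal : (volume S).toReal = Δ := by rw [hvolS, ENNReal.toReal_ofReal hΔ0]
  have hΔpos : 0 < Δ := by rw [htoReal] at hSpos; exact hSpos
  have hbud0 : t * Δ ≤ b - a := by
    rw [htoReal] at ht2
    exact (le_div_iff₀ hΔpos).1 ht2
  have hmml : mmass l = Δ := by
    have h1 : mmass l = mmass L₀ := by
      rw [mmass_def, mmass_def]
      exact (hperm.map _).sum_eq
    rw [h1, hL₀, mmass_def, List.map_ofFn, List.sum_ofFn, hΔ]
    simp
  -- apply the core lemma
  obtain ⟨J, hbndJ, hpwJ, hcovJ, hdichJ, hlenJ⟩ :=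
    core t ht1 l.length l a b le_rfl
      (fun p hp => by
        obtain ⟨k, rfl⟩ := hmem' p hp
        exact ⟨(hbnd k).1, hcd k, (hbnd k).2⟩)
      hsep (by rw [hmml]; exact hbud0)
  have hget : ∀ n : Fin J.length, J.get n ∈ J := fun n => List.get_mem J n
  refine ⟨J.length, fun n => (J.get n).1, fun n => (J.get n).2, ?_, ?_, ?_, ?_, ?_⟩
  · intro n
    exact (hbndJ _ (hget n)).2.1
  · intro n
    exact Set.Icc_subset_Icc (hbndJ _ (hget n)).1 (hbndJ _ (hget n)).2.2
  · intro n m hnm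
    have key : ∀ i j : Fin J.length, i < j →
        Disjoint (Set.Icc (J.get i).1 (J.get i).2) (Set.Icc (J.get j).1 (J.get j).2) := by
      intro i j hij
      have := List.pairwise_iff_get.1 hpwJ i j hij
      refine Set.disjoint_left.2 fun y hy hy' => ?_
      exact absurd (lt_of_le_of_lt hy.2 (lt_of_lt_of_le this hy'.1)) (lt_irrefl y)
    rcases lt_or_gt_of_ne hnm with h | h
    · exact key n m h
    · exact (key m n h).symm
  · intro y hy
    rw [hS] at hy
    obtain ⟨k, hk⟩ := Set.mem_iUnion.1 hy
    obtain ⟨q, hqJ, hq1, hq2⟩ := hcovJ _ (hmeml k)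
    obtain ⟨n, hn⟩ := List.mem_iff_get.1 hqJ
    refine Set.mem_iUnion.2 ⟨n, ?_⟩
    show y ∈ Set.Icc (J.get n).1 (J.get n).2
    rw [hn]
    exact ⟨le_trans hq1 (le_of_lt hk.1), le_trans (le_of_lt hk.2) hq2⟩
  · intro n
    set q : ℝ × ℝ := J.get n with hq
    have hqJ : q ∈ J := hget n
    have heg : q.1 ≤ q.2 := (hbndJ q hqJ).2.1
    -- volume of S ∩ I
    have hSI : S ∩ Set.Icc q.1 q.2 = ⋃ k, (Set.Ioo (c k) (d k) ∩ Set.Icc q.1 q.2) := by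
      rw [hS, Set.iUnion_inter]
    have hdisj' : Pairwise (onFun Disjoint fun k => Set.Ioo (c k) (d k) ∩ Set.Icc q.1 q.2) :=
      fun i j hij => ((hdisj hij).mono Set.inter_subset_left Set.inter_subset_left)
    have hvol1 : volume (S ∩ Set.Icc q.1 q.2)
        = ∑ k, volume (Set.Ioo (c k) (d k) ∩ Set.Icc q.1 q.2) := by
      rw [hSI, measure_iUnion hdisj' (fun k => measurableSet_Ioo.inter measurableSet_Icc),
        tsum_fintype]
    have hterm : ∀ k, volume (Set.Ioo (c k) (d k) ∩ Set.Icc q.1 q.2)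
        = if (q.1 ≤ c k ∧ d k ≤ q.2) then ENNReal.ofReal (d k - c k) else 0 := by
      intro k
      by_cases hPk : q.1 ≤ c k ∧ d k ≤ q.2
      · rw [if_pos hPk]
        have hsub' : Set.Ioo (c k) (d k) ⊆ Set.Icc q.1 q.2 := fun y hy =>
          ⟨le_trans hPk.1 (le_of_lt hy.1), le_trans (le_of_lt hy.2) hPk.2⟩
        rw [Set.inter_eq_self_of_subset_left hsub', Real.volume_Ioo]
      · rw [if_neg hPk]
        rcases hdichJ q hqJ (c k, d k) (hmeml k) with hown | hc1 | hc2
        · exact absurd hown hPk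
        · have : Set.Ioo (c k) (d k) ∩ Set.Icc q.1 q.2 = ∅ := by
            ext y
            simp only [Set.mem_inter_iff, Set.mem_Ioo, Set.mem_Icc, Set.mem_empty_iff_false,
              iff_false, not_and]
            intro h1 h2 h3
            simp only at hc1
            linarith
          rw [this, measure_empty]
        · have : Set.Ioo (c k) (d k) ∩ Set.Icc q.1 q.2 = ∅ := by
            ext y
            simp only [Set.mem_inter_iff, Set.mem_Ioo, Set.mem_Icc, Set.mem_empty_iff_false,
              iff_false, not_and]
            intro h1 h2 h3
            simp only at hc2
            linarith
          rw [this, measure_empty]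
    -- identify the filtered mass with the Fin-sum
    have hfsum : mmass (l.filter fun p => decide (q.1 ≤ p.1 ∧ p.2 ≤ q.2))
        = ∑ k, if (q.1 ≤ c k ∧ d k ≤ q.2) then (d k - c k) else 0 := by
      rw [mmass_filter_eq]
      have h1 : ((l.map fun p => if decide (q.1 ≤ p.1 ∧ p.2 ≤ q.2) then p.2 - p.1 else 0)).sum
          = ((L₀.map fun p => if decide (q.1 ≤ p.1 ∧ p.2 ≤ q.2) then p.2 - p.1 else 0)).sum :=
        (hperm.map _).sum_eq
      rw [h1, hL₀, List.map_ofFn, List.sum_ofFn]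
      refine Finset.sum_congr rfl fun k _ => ?_
      simp only [Function.comp, decide_eq_true_eq]
    have hsumnn : ∀ k ∈ Finset.univ (α := Fin N),
        (0:ℝ) ≤ if (q.1 ≤ c k ∧ d k ≤ q.2) then (d k - c k) else 0 := by
      intro k _
      split
      · linarith [hcd k]
      · exact le_rfl
    calc ENNReal.ofReal t * volume (S ∩ Set.Icc q.1 q.2)
        = ENNReal.ofReal t *
            ∑ k, if (q.1 ≤ c k ∧ d k ≤ q.2) then ENNReal.ofReal (d k - c k) else 0 := by
          rw [hvol1]
          congr 1
          exact Finset.sum_congr rfl fun k _ => hterm k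
      _ = ENNReal.ofReal t *
            ENNReal.ofReal (∑ k, if (q.1 ≤ c k ∧ d k ≤ q.2) then (d k - c k) else 0) := by
          rw [ENNReal.ofReal_sum_of_nonneg hsumnn]
          congr 1
          refine Finset.sum_congr rfl fun k _ => ?_
          split
          · rfl
          · simp
      _ = ENNReal.ofReal (t * ∑ k, if (q.1 ≤ c k ∧ d k ≤ q.2) then (d k - c k) else 0) :=
          (ENNReal.ofReal_mul ht0).symm
      _ = ENNReal.ofReal (q.2 - q.1) := by
          rw [hlenJ q hqJ]
          congr 2
          rw [← hfsum]
          congr 1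
          refine List.filter_congr fun p _ => ?_
          exact decide_eq_decide.2 Iff.rfl
      _ = volume (Set.Icc q.1 q.2) := (Real.volume_Icc).symm
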